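/- arXiv:1909.13370 — 2 statements merged into one kernel-verified Lean document; each statement's English description precedes it below -/
import Mathlib

section
/- Let N be a finite group of characteristic p, meaning C_N(O_p(N)) ≤ O_p(N), and let S be a Sylow p-subgroup of N. If α is an automorphism of N that restricts to the identity on S, then α is conjugation by an element of Z(S). -/
open Subgroup

/-- The `p`-core of a group: the join of all normal `p`-subgroups
(which is the largest normal `p`-subgroup). -/
def pCore (p : ℕ) (G : Type*) [Group G] : Subgroup G :=
  ⨆ (N : Subgroup G) (_ : N.Normal ∧ IsPGroup p N), N

section aux

variable {p : ℕ} [Fact p.Prime] {N : Type} [Group N] [Finite N]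

open Pointwise in
lemma pCore_le_sylow (S : Sylow p N) : pCore p N ≤ (S : Subgroup N) := by
  refine iSup_le fun K => iSup_le fun hK => ?_
  obtain ⟨T, hT⟩ := hK.2.exists_le_sylow
  obtain ⟨g, hg⟩ := MulAction.exists_smul_eq N T S
  intro x hx
  have hmem : x ∈ ((g • T : Sylow p N) : Subgroup N) := by
    show x ∈ MulAut.conj g • (T : Subgroup N)
    rw [Subgroup.mem_pointwise_smul_iff_inv_smul_mem]
    have h1 : (MulAut.conj g)⁻¹ • x = g⁻¹ * x * g := by
      show (MulAut.conj g)⁻¹ x = _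
      rw [← MulAut.conj_symm_apply]
      rfl
    rw [h1]
    have := hK.1.conj_mem x hx g⁻¹
    exact hT (by simpa using this)
  rwa [hg] at hmem

omit [Fact p.Prime] [Finite N] in
lemma pCore_map_conj_le (g : N) :
    Subgroup.map (MulAut.conj g).toMonoidHom (pCore p N) ≤ pCore p N := by
  unfold pCore
  rw [Subgroup.map_iSup]
  refine iSup_le fun K => ?_
  rw [Subgroup.map_iSup]
  refine iSup_le fun hK => ?_
  have hmap : Subgroup.map (MulAut.conj g).toMonoidHom K = K := by
    apply le_antisymm
    · rintro x ⟨y, hy, rfl⟩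
      exact hK.1.conj_mem y hy g
    · intro x hx
      refine ⟨g⁻¹ * x * g, by simpa using hK.1.conj_mem x hx g⁻¹, ?_⟩
      show g * (g⁻¹ * x * g) * g⁻¹ = x
      group
  rw [hmap]
  exact le_iSup_of_le K (le_iSup_of_le hK le_rfl)

omit [Fact p.Prime] [Finite N] in
lemma pCore_normal : (pCore p N).Normal :=
  ⟨fun x hx g => pCore_map_conj_le g ⟨x, hx, rfl⟩⟩

end aux

/-- If `N` is a finite group of characteristic `p`
(`C_N(O_p(N)) ≤ O_p(N)`), `S` is a Sylow p-subgroup of `N`, and `α` is an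
automorphism of `N` restricting to the identity on `S`, then `α` is conjugation by
an element of `Z(S)`. -/
theorem stmt4 (p : ℕ) [Fact p.Prime] (N : Type) [Group N] [Finite N]
    (hchar : Subgroup.centralizer (pCore p N : Set N) ≤ pCore p N)
    (S : Sylow p N) (α : MulAut N)
    (hα : ∀ s ∈ (S : Subgroup N), α s = s) :
    ∃ z ∈ (S : Subgroup N) ⊓ Subgroup.centralizer (S : Set N),
      ∀ x : N, α x = z * x * z⁻¹ := by
  set Q : Subgroup N := pCore p N with hQdef
  have hQS : Q ≤ (S : Subgroup N) := pCore_le_sylow S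
  have hQn : Q.Normal := pCore_normal
  have hαQ : ∀ q ∈ Q, α q = q := fun q hq => hα q (hQS hq)
  -- key conjugation identity
  have hconj : ∀ (y q : N), q ∈ Q → α y * q * (α y)⁻¹ = y * q * y⁻¹ := by
    intro y q hq
    have h1 : y * q * y⁻¹ ∈ Q := hQn.conj_mem q hq y
    have h2 : α (y * q * y⁻¹) = y * q * y⁻¹ := hαQ _ h1
    calc α y * q * (α y)⁻¹ = α (y * q * y⁻¹) := by
          rw [map_mul, map_mul, map_inv, hαQ q hq]
      _ = y * q * y⁻¹ := h2
  set c : N → N := fun y => α y * y⁻¹ with hcdef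
  have hcQ : ∀ y, c y ∈ Q := by
    intro y
    have hmem : y⁻¹ * α y ∈ Subgroup.centralizer (Q : Set N) := by
      rw [Subgroup.mem_centralizer_iff]
      intro q hq
      have := hconj y q hq
      -- α y * q * (α y)⁻¹ = y * q * y⁻¹
      have h' : y⁻¹ * (α y * q * (α y)⁻¹) * y = q := by rw [this]; group
      calc q * (y⁻¹ * α y) = y⁻¹ * (α y * q * (α y)⁻¹) * y * (y⁻¹ * α y) := by rw [h']
        _ = (y⁻¹ * α y) * q := by group
    have : y⁻¹ * α y ∈ Q := hchar hmem
    have := hQn.conj_mem _ this y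
    simpa [hcdef, mul_assoc] using this
  have hcC : ∀ y, c y ∈ Subgroup.centralizer (Q : Set N) := by
    intro y
    rw [Subgroup.mem_centralizer_iff]
    intro q hq
    have hq' : y⁻¹ * q * y ∈ Q := by
      have := hQn.conj_mem q hq y⁻¹; simpa using this
    have := hconj y (y⁻¹ * q * y) hq'
    -- α y * (y⁻¹ q y) * (α y)⁻¹ = y * (y⁻¹ q y) * y⁻¹ = q
    have h1 : α y * (y⁻¹ * q * y) * (α y)⁻¹ = q := by rw [this]; group
    calc q * c y = (α y * (y⁻¹ * q * y) * (α y)⁻¹) * c y := by rw [h1]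
      _ = c y * q := by simp only [hcdef]; group
  set Z : Subgroup N := Subgroup.centralizer (Q : Set N) ⊓ Q with hZdef
  have hZcomm : IsMulCommutative Z := by
    constructor
    constructor
    rintro ⟨a, ha⟩ ⟨b, hb⟩
    obtain ⟨ha1, _⟩ := Subgroup.mem_inf.mp ha
    obtain ⟨_, hb2⟩ := Subgroup.mem_inf.mp hb
    apply Subtype.ext
    simpa using (Subgroup.mem_centralizer_iff.mp ha1 b hb2).symm
  have hcZ : ∀ y, c y ∈ Z := fun y => Subgroup.mem_inf.mpr ⟨hcC y, hcQ y⟩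
  -- cocycle property
  have hcoc : ∀ y x, c (y * x) = c y * (y * c x * y⁻¹) := by
    intro y x
    simp only [hcdef, map_mul]
    group
  have hZconj : ∀ (y : N), ∀ a ∈ Z, y * a * y⁻¹ ∈ Z := by
    intro y a ha
    obtain ⟨ha1, ha2⟩ := Subgroup.mem_inf.mp ha
    refine Subgroup.mem_inf.mpr ⟨?_, hQn.conj_mem a ha2 y⟩
    rw [Subgroup.mem_centralizer_iff]
    intro q hq
    have hq' : y⁻¹ * q * y ∈ Q := by
      have := hQn.conj_mem q hq y⁻¹; simpa using this
    have := Subgroup.mem_centralizer_iff.mp ha1 _ hq'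
    calc q * (y * a * y⁻¹) = y * ((y⁻¹ * q * y) * a) * y⁻¹ := by group
      _ = y * (a * (y⁻¹ * q * y)) * y⁻¹ := by rw [this]
      _ = (y * a * y⁻¹) * q := by group
  -- the conjugation monoid hom on Z
  have hφaux : ∀ y : N, ∀ a : Z, y * (a : N) * y⁻¹ ∈ Z := fun y a => hZconj y a a.2
  letI : CommGroup Z := by
    exact { (inferInstance : Group Z) with mul_comm := fun a b => hZcomm.is_comm.comm a b }
  set φ : N → (Z →* Z) := fun y =>
    { toFun := fun a => ⟨y * (a : N) * y⁻¹, hφaux y a⟩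
      map_one' := by apply Subtype.ext; simp
      map_mul' := by
        intro a b
        apply Subtype.ext
        push_cast
        group } with hφdef
  -- the function on the quotient
  haveI : Fintype (N ⧸ (S : Subgroup N)) := Fintype.ofFinite _
  set g : N → Z := fun x => ⟨c x, hcZ x⟩ with hgdef
  have hginv : ∀ (a b : N), (QuotientGroup.leftRel (S : Subgroup N)) a b → g a = g b := by
    intro a b h
    rw [QuotientGroup.leftRel_apply] at h
    apply Subtype.ext
    have : b = a * (a⁻¹ * b) := by group
    show c a = c b
    rw [this, hcdef]
    simp only
    rw [map_mul, hα _ h]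
    group
  set f : N ⧸ (S : Subgroup N) → Z := fun u => Quotient.liftOn' u g hginv with hfdef
  have hf_mk : ∀ x : N, f (QuotientGroup.mk x) = g x := fun x => rfl
  set zZ : Z := ∏ u : N ⧸ (S : Subgroup N), f u with hzZdef
  set n : ℕ := Fintype.card (N ⧸ (S : Subgroup N)) with hndef
  -- key identity : φ y (f u) = (g y)⁻¹ * f (y • u)
  have hstep : ∀ (y : N) (u : N ⧸ (S : Subgroup N)), φ y (f u) = (g y)⁻¹ * f (y • u) := by
    intro y u
    induction u using Quotient.inductionOn' with
    | h x =>
      have h1 : (y • (QuotientGroup.mk x : N ⧸ (S : Subgroup N))) = QuotientGroup.mk (y * x) :=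
        rfl
      rw [h1, hf_mk, hf_mk]
      apply Subtype.ext
      show y * c x * y⁻¹ = (c y)⁻¹ * c (y * x)
      rw [hcoc y x]
      group
  have hmain : ∀ y : N, φ y zZ = ((g y)⁻¹) ^ n * zZ := by
    intro y
    rw [hzZdef, map_prod]
    have : ∀ u, φ y (f u) = (g y)⁻¹ * f (y • u) := hstep y
    rw [Finset.prod_congr rfl (fun u _ => this u), Finset.prod_mul_distrib,
      Finset.prod_const, Finset.card_univ]
    congr 1
    exact Equiv.prod_comp (MulAction.toPerm y) f
  -- choose m with n * m ≡ 1 [MOD Nat.card S]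
  have hcop : (Nat.card S).Coprime n := by
    have h := Sylow.card_coprime_index S
    rw [Subgroup.index_eq_card] at h
    rwa [hndef, ← Nat.card_eq_fintype_card]
  have hex : ∃ m : ℕ, n * m ≡ 1 [MOD Nat.card S] := by
    rcases eq_or_lt_of_le (Nat.one_le_iff_ne_zero.mpr (Nat.card_pos (α := S)).ne') with h | h
    · exact ⟨1, by rw [← h]; exact Nat.modEq_one⟩
    · obtain ⟨m, hm⟩ := Nat.exists_mul_mod_eq_one_of_coprime hcop.symm h
      exact ⟨m, by rw [Nat.ModEq, Nat.one_mod_eq_one.mpr (by omega)]; exact hm.2⟩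
  obtain ⟨m, hm⟩ := hex
  -- the element z
  set z : N := ((zZ ^ m : Z) : N) with hzdef
  have hzZm : ∀ y : N, y * z * y⁻¹ = ((c y)⁻¹) ^ (n * m) * z := by
    intro y
    have h1 : φ y (zZ ^ m) = ((g y)⁻¹) ^ (n * m) * zZ ^ m := by
      rw [map_pow, hmain, mul_pow, ← pow_mul]
    have h2 : ((φ y (zZ ^ m) : Z) : N) = (((g y)⁻¹ ^ (n * m) * zZ ^ m : Z) : N) :=
      congrArg _ h1
    calc y * z * y⁻¹ = ((φ y (zZ ^ m) : Z) : N) := rfl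
      _ = (((g y)⁻¹ ^ (n * m) * zZ ^ m : Z) : N) := h2
      _ = ((c y)⁻¹) ^ (n * m) * z := by push_cast; rfl
  -- powers of elements of S
  have hpow : ∀ a : N, a ∈ (S : Subgroup N) → a ^ (n * m) = a := by
    intro a ha
    have hord : orderOf a ∣ Nat.card S := by
      have : orderOf (⟨a, ha⟩ : (S : Subgroup N)) ∣ Nat.card (S : Subgroup N) :=
        orderOf_dvd_natCard _
      rwa [Subgroup.orderOf_mk] at this
    have : n * m ≡ 1 [MOD orderOf a] := hm.of_dvd hord
    calc a ^ (n * m) = a ^ 1 := pow_eq_pow_iff_modEq.mpr this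
      _ = a := pow_one a
  have hfinal : ∀ y : N, α y = z * y * z⁻¹ := by
    intro y
    have h1 : y * z * y⁻¹ = (c y)⁻¹ * z := by
      rw [hzZm y, inv_pow, hpow (c y) (hQS (hcQ y))]
    have h2 : c y * y * z = z * y := by
      calc c y * y * z = c y * ((y * z * y⁻¹) * y) := by group
        _ = c y * (((c y)⁻¹ * z) * y) := by rw [h1]
        _ = z * y := by group
    calc α y = c y * y := by rw [hcdef]; simp only; group
      _ = (c y * y * z) * z⁻¹ := by group
      _ = z * y * z⁻¹ := by rw [h2]
  refine ⟨z, Subgroup.mem_inf.mpr ⟨?_, ?_⟩, hfinal⟩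
  · exact hQS (Subgroup.mem_inf.mp (zZ ^ m).2).2
  · rw [Subgroup.mem_centralizer_iff]
    intro s hs
    have := hfinal s
    rw [hα s hs] at this
    calc s * z = (z * s * z⁻¹) * z := by rw [← this]
      _ = z * s := by group
end

section
/- Let S be a finite p-group, Q ≤ S, and T = N_S(Q). If J(Q) = J(T) (Thompson subgroups agree), then N_{Q·C_S(J(Q))}(Q) = Q; that is, Q is self-normalizing in Q·C_S(J(Q)). -/
open Subgroup

/-- The maximum of the orders of abelian subgroups of a group. -/
noncomputable def maxAbelianOrder (S : Type*) [Group S] : ℕ :=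
  sSup {n : ℕ | ∃ A : Subgroup S, IsMulCommutative A ∧ Nat.card A = n}

/-- The (abelian) Thompson subgroup: generated by the abelian subgroups of maximal order. -/
noncomputable def thompsonJ (S : Type*) [Group S] : Subgroup S :=
  ⨆ (A : Subgroup S) (_ : IsMulCommutative A ∧ Nat.card A = maxAbelianOrder S), A

section Aux
variable {G : Type*} [Group G]

lemma le_thompsonJ {A : Subgroup G} (h : IsMulCommutative A ∧ Nat.card A = maxAbelianOrder G) :
    A ≤ thompsonJ G :=
  le_iSup_of_le A (le_iSup_of_le h le_rfl)

lemma bddAbove_abelianOrders [Finite G] :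
    BddAbove {n : ℕ | ∃ A : Subgroup G, IsMulCommutative A ∧ Nat.card A = n} := by
  refine ⟨Nat.card G, ?_⟩
  rintro n ⟨A, -, rfl⟩
  exact Subgroup.card_le_card_group A

lemma bot_isCommutative : IsMulCommutative (⊥ : Subgroup G) :=
  ⟨⟨fun a b => Subsingleton.elim _ _⟩⟩

lemma exists_max_abelian (G : Type*) [Group G] [Finite G] :
    ∃ A : Subgroup G, IsMulCommutative A ∧ Nat.card A = maxAbelianOrder G := by
  have h := Nat.sSup_mem (s := {n : ℕ | ∃ A : Subgroup G, IsMulCommutative A ∧ Nat.card A = n})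
    ⟨1, ⊥, bot_isCommutative, Subgroup.card_bot⟩ bddAbove_abelianOrders
  exact h

lemma le_maxAbelianOrder [Finite G] (A : Subgroup G) [hA : IsMulCommutative A] :
    Nat.card A ≤ maxAbelianOrder G :=
  le_csSup bddAbove_abelianOrders ⟨A, hA, rfl⟩

end Aux

section Aux2
variable {G : Type*} [Group G]

lemma centralizer_thompsonJ_le (G : Type*) [Group G] [Finite G] :
    centralizer (thompsonJ G : Set G) ≤ thompsonJ G := by
  intro x hx
  obtain ⟨A, hAc, hAcard⟩ := exists_max_abelian G
  haveI := hAc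
  have hxA : ∀ a ∈ A, a * x = x * a := fun a ha =>
    (mem_centralizer_iff.mp hx) a (le_thompsonJ ⟨hAc, hAcard⟩ ha)
  set B := A ⊔ zpowers x with hB
  have hAB : A ≤ centralizer (B : Set G) := by
    rw [le_centralizer_iff]
    refine sup_le A.le_centralizer ?_
    rw [zpowers_le]
    exact mem_centralizer_iff.mpr hxA
  have hxB : zpowers x ≤ centralizer (B : Set G) := by
    rw [le_centralizer_iff]
    refine sup_le ?_ (le_centralizer _)
    rw [le_centralizer_iff, zpowers_le]
    exact mem_centralizer_iff.mpr hxA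
  haveI hBcomm : IsMulCommutative B := le_centralizer_iff_isMulCommutative.mp (sup_le hAB hxB)
  have hcard : Nat.card B ≤ Nat.card A := hAcard ▸ le_maxAbelianOrder B
  have hEq : A = B := Subgroup.eq_of_le_of_card_ge le_sup_left hcard
  refine le_thompsonJ ⟨hAc, hAcard⟩ ?_
  rw [hEq]
  exact mem_sup_right (mem_zpowers x)

lemma maxAbelianOrder_le_of_equiv {G H : Type*} [Group G] [Group H] [Finite G] [Finite H]
    (e : G ≃* H) : maxAbelianOrder G ≤ maxAbelianOrder H := by
  obtain ⟨A, hAc, hAcard⟩ := exists_max_abelian G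
  haveI := hAc
  calc maxAbelianOrder G = Nat.card A := hAcard.symm
    _ = Nat.card (A.map (e : G →* H)) := Nat.card_congr (e.subgroupMap A).toEquiv
    _ ≤ maxAbelianOrder H := le_maxAbelianOrder _

lemma maxAbelianOrder_eq_of_equiv {G H : Type*} [Group G] [Group H] [Finite G] [Finite H]
    (e : G ≃* H) : maxAbelianOrder G = maxAbelianOrder H :=
  le_antisymm (maxAbelianOrder_le_of_equiv e) (maxAbelianOrder_le_of_equiv e.symm)

lemma map_thompsonJ_le {G H : Type*} [Group G] [Group H] [Finite G] [Finite H] (e : G ≃* H) :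
    (thompsonJ G).map (e : G →* H) ≤ thompsonJ H := by
  rw [Subgroup.map_le_iff_le_comap, thompsonJ]
  refine iSup_le fun A => iSup_le fun hA => ?_
  rw [← Subgroup.map_le_iff_le_comap]
  haveI := hA.1
  refine le_thompsonJ ⟨inferInstance, ?_⟩
  rw [← Nat.card_congr (e.subgroupMap A).toEquiv, hA.2]
  exact maxAbelianOrder_eq_of_equiv e

lemma map_thompsonJ_equiv {G H : Type*} [Group G] [Group H] [Finite G] [Finite H] (e : G ≃* H) :
    (thompsonJ G).map (e : G →* H) = thompsonJ H := by
  refine le_antisymm (map_thompsonJ_le e) ?_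
  rw [Subgroup.map_equiv_eq_comap_symm, ← Subgroup.map_le_iff_le_comap]
  exact map_thompsonJ_le e.symm

end Aux2

/-- Let `S` be a finite `p`-group, `Q ≤ S`, and `T = N_S(Q)`.  If
`J(Q) = J(T)` (as subgroups of `S`), then `N_{Q·C_S(J(Q))}(Q) = Q`. -/
theorem stmt13 (p : ℕ) [Fact p.Prime] (S : Type) [Group S] [Finite S]
    (hS : IsPGroup p S) (Q : Subgroup S)
    (hJ : (thompsonJ Q).map Q.subtype = (thompsonJ (normalizer (Q : Set S))).map (normalizer (Q : Set S)).subtype) :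
    (Q ⊔ Subgroup.centralizer (((thompsonJ Q).map Q.subtype : Subgroup S) : Set S))
        ⊓ (normalizer (Q : Set S)) = Q := by
  set T : Subgroup S := normalizer (Q : Set S) with hT
  set J : Subgroup S := (thompsonJ Q).map Q.subtype with hJdef
  have hJT : J = (thompsonJ T).map T.subtype := hJ
  have hJQ : J ≤ Q := Subgroup.map_subtype_le _
  set C : Subgroup S := centralizer (J : Set S) with hC
  -- conjugation by elements of T preserves J
  have hconj : ∀ t ∈ T, ∀ s ∈ J, t * s * t⁻¹ ∈ J := by
    intro t ht s hs
    rw [hJT] at hs ⊢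
    obtain ⟨u, hu, rfl⟩ := hs
    have hmap := map_thompsonJ_equiv (G := T) (H := T) (MulAut.conj (⟨t, ht⟩ : T))
    have hu' : (⟨t, ht⟩ : T) * u * (⟨t, ht⟩ : T)⁻¹ ∈ thompsonJ T := by
      rw [← hmap]
      exact ⟨u, hu, rfl⟩
    exact ⟨_, hu', rfl⟩
  have hTnormJ : ∀ t ∈ T, ∀ c ∈ C, t * c * t⁻¹ ∈ C := by
    intro g hg c hc
    rw [mem_centralizer_iff]
    intro j hj
    have hj' : g⁻¹ * j * g ∈ J := by
      have := hconj g⁻¹ (inv_mem hg) j hj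
      simpa using this
    have hcj : (g⁻¹ * j * g) * c = c * (g⁻¹ * j * g) :=
      mem_centralizer_iff.mp hc _ hj'
    have h2 : g * ((g⁻¹ * j * g) * c) * g⁻¹ = g * (c * (g⁻¹ * j * g)) * g⁻¹ := by rw [hcj]
    simpa [mul_assoc] using h2
  have hQC_norm : Q ⊔ C ≤ (normalizer (C : Set S)) := by
    refine sup_le ?_ le_normalizer
    intro q hq
    rw [mem_normalizer_iff]
    intro c
    constructor
    · exact fun hc => hTnormJ q (le_normalizer hq) c hc
    · intro hc
      have := hTnormJ q⁻¹ (inv_mem (le_normalizer hq)) _ hc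
      simpa [mul_assoc] using this
  have hCT : C ⊓ T ≤ Q := by
    rintro x ⟨hxC, hxT⟩
    have hx' : (⟨x, hxT⟩ : T) ∈ centralizer ((thompsonJ T : Subgroup T) : Set T) := by
      rw [mem_centralizer_iff]
      intro u hu
      have huJ : (u : S) ∈ J := by rw [hJT]; exact ⟨u, hu, rfl⟩
      exact Subtype.ext (mem_centralizer_iff.mp hxC _ huJ)
    have hmem : (⟨x, hxT⟩ : T) ∈ thompsonJ T := centralizer_thompsonJ_le T hx'
    have : x ∈ J := by rw [hJT]; exact ⟨_, hmem, rfl⟩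
    exact hJQ this
  apply le_antisymm
  · rintro x ⟨hx1, hxT⟩
    have hxN : x ∈ (normalizer (C : Set S)) := hQC_norm hx1
    have hQN : Q ≤ (normalizer (C : Set S)) := le_trans le_sup_left hQC_norm
    have hCN : C ≤ (normalizer (C : Set S)) := le_normalizer
    have hsub : (⟨x, hxN⟩ : (normalizer (C : Set S))) ∈ Q.subgroupOf (normalizer (C : Set S)) ⊔ C.subgroupOf (normalizer (C : Set S)) := by
      rw [← subgroupOf_sup hQN hCN, mem_subgroupOf]
      exact hx1
    haveI : (C.subgroupOf (normalizer (C : Set S))).Normal := Subgroup.normal_in_normalizer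
    rw [← SetLike.mem_coe, Subgroup.mul_normal] at hsub
    obtain ⟨q, hq, c, hc, hqc⟩ := hsub
    have hqQ : (q : S) ∈ Q := hq
    have hcC : (c : S) ∈ C := hc
    have hx_eq : x = (q : S) * (c : S) := by
      have := congrArg (Subtype.val) hqc
      simpa using this.symm
    have hcT : (c : S) ∈ T := by
      have hc_eq : (c : S) = (q : S)⁻¹ * x := by rw [hx_eq]; group
      rw [hc_eq]
      exact mul_mem (inv_mem (le_normalizer hqQ)) hxT
    have hcQ : (c : S) ∈ Q := hCT ⟨hcC, hcT⟩
    rw [hx_eq]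
    exact mul_mem hqQ hcQ
  · exact le_inf le_sup_left le_normalizer
end
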